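/- If Φ : X → L(H,K) satisfies Φ(x)*Φ(y) = φ(⟨x,y⟩) for all x,y ∈ X, where φ : A → L(H) is a completely positive (in particular bounded) linear map, then Φ is linear and continuous, with ‖Φ(x)‖² ≤ ‖φ‖·‖x‖² for all x ∈ X. -/
import Mathlib


noncomputable section

open ContinuousLinearMap

/-- An element of the form `star c * c` (positivity in a star ring). -/
def StarPos {B : Type*} [Mul B] [Star B] (b : B) : Prop := ∃ c : B, b = star c * c

/-- Complete positivity of a `ℂ`-linear map between star rings. -/
def IsCPMap {A B : Type*} [NonUnitalRing A] [StarRing A] [Module ℂ A]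
    [NonUnitalRing B] [StarRing B] [Module ℂ B] (φ : A →ₗ[ℂ] B) : Prop :=
  ∀ (n : ℕ) (M : Matrix (Fin n) (Fin n) A), StarPos M → StarPos (M.map ⇑φ)

/-- a map `Φ : X → L(H,K)` satisfying `Φ(x)*Φ(y) = φ(⟨x,y⟩)` for a
completely positive (bounded) linear `φ` is linear and continuous, with
`‖Φ(x)‖² ≤ ‖φ‖·‖x‖²` (recall `‖x‖² = ‖⟨x,x⟩‖`). -/

lemma eq_zero_of_adjoint_comp_self_eq_zero
    {H K : Type*} [NormedAddCommGroup H] [InnerProductSpace ℂ H] [CompleteSpace H]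
    [NormedAddCommGroup K] [InnerProductSpace ℂ K] [CompleteSpace K]
    (T : H →L[ℂ] K) (h : ContinuousLinearMap.adjoint T ∘L T = 0) : T = 0 := by
  have h1 := ContinuousLinearMap.norm_adjoint_comp_self T
  rw [h, norm_zero] at h1
  have h2 : ‖T‖ = 0 := by nlinarith [norm_nonneg T]
  exact norm_eq_zero.mp h2

theorem stmt_1
    {A : Type*} [NormedRing A] [StarRing A] [CStarRing A] [NormedAlgebra ℂ A]
    [CompleteSpace A] [StarModule ℂ A]
    {H K : Type*} [NormedAddCommGroup H] [InnerProductSpace ℂ H] [CompleteSpace H]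
    [NormedAddCommGroup K] [InnerProductSpace ℂ K] [CompleteSpace K]
    {X : Type*} [AddCommGroup X] [Module ℂ X]
    (E : X → X → A)
    (hE_add : ∀ x y z, E x (y + z) = E x y + E x z)
    (hE_smul : ∀ (c : ℂ) x y, E x (c • y) = c • E x y)
    (hE_star : ∀ x y, star (E x y) = E y x)
    (hE_pos : ∀ x, StarPos (E x x))
    (Φ : X → H →L[ℂ] K) (φ : A →L[ℂ] (H →L[ℂ] H))
    (hcp : IsCPMap (φ : A →ₗ[ℂ] (H →L[ℂ] H)))
    (hΦ : ∀ x y, adjoint (Φ x) ∘L Φ y = φ (E x y)) :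
    (∀ x y, Φ (x + y) = Φ x + Φ y) ∧ (∀ (c : ℂ) (x : X), Φ (c • x) = c • Φ x) ∧
      ∀ x, ‖Φ x‖ ^ 2 ≤ ‖φ‖ * ‖E x x‖ := by
  have hE_add' : ∀ x y z, E (x + y) z = E x z + E y z := fun x y z => by
    rw [← hE_star, hE_add, star_add, hE_star, hE_star]
  have hE_smul' : ∀ (c : ℂ) x y, E (c • x) y = (starRingEnd ℂ c) • E x y := fun c x y => by
    rw [← hE_star, hE_smul, star_smul, hE_star]; rfl
  have hadd : ∀ x y, Φ (x + y) = Φ x + Φ y := by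
    intro x y
    have h0 : adjoint (Φ (x + y) - (Φ x + Φ y)) ∘L (Φ (x + y) - (Φ x + Φ y)) = 0 := by
      simp only [map_sub, map_add, sub_comp, add_comp, comp_sub, comp_add, hΦ,
        hE_add, hE_add']
      abel
    have := eq_zero_of_adjoint_comp_self_eq_zero _ h0
    rwa [sub_eq_zero] at this
  refine ⟨hadd, ?_, ?_⟩
  · intro c x
    have h0 : adjoint (Φ (c • x) - c • Φ x) ∘L (Φ (c • x) - c • Φ x) = 0 := by
      have hadj : adjoint (c • Φ x) = (starRingEnd ℂ c) • adjoint (Φ x) :=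
        LinearIsometryEquiv.map_smulₛₗ ContinuousLinearMap.adjoint c (Φ x)
      simp only [map_sub, hadj, sub_comp, comp_sub, smul_comp, comp_smul, hΦ,
        hE_smul, hE_smul', map_smul, smul_smul]
      rw [mul_comm]
      abel_nf
      simp
    have := eq_zero_of_adjoint_comp_self_eq_zero _ h0
    rwa [sub_eq_zero] at this
  · intro x
    have h1 : ‖Φ x‖ ^ 2 = ‖adjoint (Φ x) ∘L Φ x‖ := by
      rw [ContinuousLinearMap.norm_adjoint_comp_self, sq]
    rw [h1, hΦ]
    exact φ.le_opNorm _
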